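/- arXiv:2503.05297 — 3 statements merged into one kernel-verified Lean document; each statement's English description precedes it below -/
import Mathlib

section
/- Combining the two previous results: if X₁,…,Xₙ are i.i.d. from P⁰, the kernel is bounded by 1, and θ̂ exactly minimizes θ ↦ D(P_θ, P̂ₙ), then E[D(P_{θ̂}, P⁰)] ≤ inf_{θ∈Θ} D(P_θ, P⁰) + 2/√n. -/
open MeasureTheory
open scoped RealInnerProductSpace

/-- Bounded a.e.-strongly-measurable functions on a finite measure space are integrable. -/
lemma integrable_of_bdd' {α E : Type*} [MeasurableSpace α] {μ : Measure α} [IsFiniteMeasure μ]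
    [NormedAddCommGroup E] {f : α → E} (hm : AEStronglyMeasurable f μ) (C : ℝ)
    (h : ∀ a, ‖f a‖ ≤ C) : Integrable f μ :=
  (integrable_const C).mono' hm (ae_of_all _ h)

/-- Cauchy–Schwarz / Jensen: on a probability space, `(∫ f)² ≤ ∫ f²`. -/
lemma sq_integral_le_integral_sq' {α : Type*} [MeasurableSpace α] {μ : Measure α}
    [IsProbabilityMeasure μ] {f : α → ℝ} (hf : Integrable f μ)
    (hf2 : Integrable (fun a => f a ^ 2) μ) :
    (∫ a, f a ∂μ) ^ 2 ≤ ∫ a, f a ^ 2 ∂μ := by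
  set c := ∫ a, f a ∂μ with hc
  have h0 : 0 ≤ ∫ a, (f a - c) ^ 2 ∂μ := integral_nonneg fun a => sq_nonneg _
  have hexp : (fun a => (f a - c) ^ 2) = fun a => (f a ^ 2 - (2 * c) * f a) + c ^ 2 := by
    funext a; ring
  have i1 : Integrable (fun a => f a ^ 2 - (2 * c) * f a) μ := hf2.sub (hf.const_mul _)
  have i2 : Integrable (fun a => (2 * c) * f a) μ := hf.const_mul _
  have h1 : ∫ a, (f a - c) ^ 2 ∂μ = (∫ a, f a ^ 2 ∂μ) - c ^ 2 := by
    rw [hexp, integral_add i1 (integrable_const _),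
      integral_sub hf2 i2, integral_const_mul, integral_const]
    simp [← hc]
    ring
  rw [h1] at h0
  linarith

set_option maxHeartbeats 2000000 in
theorem mmd_minimizer_expected_risk {Ω : Type*} [MeasurableSpace Ω]
    {X : Type*} [MeasurableSpace X] {H : Type*}
    [NormedAddCommGroup H] [InnerProductSpace ℝ H] [CompleteSpace H]
    {Θ : Type*} [Nonempty Θ]
    (μ : Measure Ω) [IsProbabilityMeasure μ]
    (φ : X → H) (hφ : MeasureTheory.StronglyMeasurable φ) (hbdd : ∀ x, ‖φ x‖ ≤ 1)
    (n : ℕ) (hn : 0 < n) (Xs : Fin n → Ω → X)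
    (P0 : Measure X) [IsProbabilityMeasure P0]
    (hmeas : ∀ i, Measurable (Xs i))
    (hlaw : ∀ i, Measure.map (Xs i) μ = P0)
    (hindep : ProbabilityTheory.iIndepFun
      Xs μ)
    (Pθ : Θ → Measure X) [∀ θ, IsProbabilityMeasure (Pθ θ)]
    (θhat : Ω → Θ)
    (hargmin : ∀ ω θ,
      ‖(∫ x, φ x ∂(Pθ (θhat ω))) - (n : ℝ)⁻¹ • ∑ i, φ (Xs i ω)‖ ≤
        ‖(∫ x, φ x ∂(Pθ θ)) - (n : ℝ)⁻¹ • ∑ i, φ (Xs i ω)‖)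
    (hmeas' : AEStronglyMeasurable
      (fun ω => ‖(∫ x, φ x ∂(Pθ (θhat ω))) - ∫ x, φ x ∂P0‖) μ) :
    ∫ ω, ‖(∫ x, φ x ∂(Pθ (θhat ω))) - ∫ x, φ x ∂P0‖ ∂μ ≤
      (⨅ θ, ‖(∫ x, φ x ∂(Pθ θ)) - ∫ x, φ x ∂P0‖) + 2 / Real.sqrt n := by
  -- Notation
  set m0 : H := ∫ x, φ x ∂P0 with hm0
  set S : Ω → H := fun ω => (n : ℝ)⁻¹ • ∑ i, φ (Xs i ω) with hS
  -- mean embeddings are bounded by 1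
  have hm_le : ∀ (ν : Measure X), IsProbabilityMeasure ν → ‖∫ x, φ x ∂ν‖ ≤ 1 := by
    intro ν hν
    have h1 : ‖∫ x, φ x ∂ν‖ ≤ ∫ x, ‖φ x‖ ∂ν := norm_integral_le_integral_norm φ
    have h2 : ∫ x, ‖φ x‖ ∂ν ≤ ∫ _x, (1 : ℝ) ∂ν := by
      refine integral_mono (integrable_of_bdd' hφ.norm.aestronglyMeasurable 1
        (fun x => by simpa using hbdd x)) (integrable_const 1) hbdd
    simpa using h1.trans h2
  have hm0_le : ‖m0‖ ≤ 1 := hm_le P0 inferInstance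
  have hmθ_le : ∀ θ, ‖∫ x, φ x ∂(Pθ θ)‖ ≤ 1 := fun θ => hm_le (Pθ θ) inferInstance
  -- φ is integrable w.r.t. P0
  have hφ_int : Integrable φ P0 := integrable_of_bdd' hφ.aestronglyMeasurable 1 hbdd
  -- centered feature map
  set g : X → H := fun x => φ x - m0 with hg
  have hgm : StronglyMeasurable g := hφ.sub stronglyMeasurable_const
  have hg_bdd : ∀ x, ‖g x‖ ≤ 2 := fun x =>
    (norm_sub_le _ _).trans (by linarith [hbdd x, hm0_le])
  have hg_int : Integrable g P0 := integrable_of_bdd' hgm.aestronglyMeasurable 2 hg_bdd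
  have hg_mean : ∫ x, g x ∂P0 = 0 := by
    rw [hg]
    rw [integral_sub hφ_int (integrable_const _), integral_const]
    simp [← hm0]
  -- the centered sum T
  set T : Ω → H := fun ω => ∑ i, g (Xs i ω) with hT
  have hSm0 : ∀ ω, S ω - m0 = (n : ℝ)⁻¹ • T ω := by
    intro ω
    have hne : (n : ℝ) ≠ 0 := Nat.cast_ne_zero.2 hn.ne'
    have hns : (n : ℝ)⁻¹ • ((n : ℕ) • m0) = m0 := by
      rw [← Nat.cast_smul_eq_nsmul ℝ, smul_smul, inv_mul_cancel₀ hne, one_smul]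
    calc S ω - m0 = (n : ℝ)⁻¹ • (∑ i, φ (Xs i ω)) - (n : ℝ)⁻¹ • ((n : ℕ) • m0) := by
          rw [hns]
      _ = (n : ℝ)⁻¹ • ((∑ i, φ (Xs i ω)) - (n : ℕ) • m0) := (smul_sub _ _ _).symm
      _ = (n : ℝ)⁻¹ • T ω := by
          congr 1
          simp [hT, hg, Finset.sum_sub_distrib]
  -- measurability helpers
  have hYm : ∀ i : Fin n, StronglyMeasurable (fun ω => g (Xs i ω)) := fun i =>
    hgm.comp_measurable (hmeas i)
  have hTm : StronglyMeasurable T := Finset.stronglyMeasurable_fun_sum _ fun i _ => hYm i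
  have hT_bdd : ∀ ω, ‖T ω‖ ≤ 2 * n := by
    intro ω
    calc ‖T ω‖ ≤ ∑ i : Fin n, ‖g (Xs i ω)‖ := norm_sum_le _ _
      _ ≤ ∑ _i : Fin n, (2 : ℝ) := Finset.sum_le_sum fun i _ => hg_bdd _
      _ = 2 * n := by simp [mul_comm]
  -- the inner-product cross functions are integrable
  have hinner_m : ∀ i j : Fin n,
      StronglyMeasurable (fun ω => ⟪g (Xs i ω), g (Xs j ω)⟫) := fun i j =>
    continuous_inner.comp_stronglyMeasurable ((hYm i).prodMk (hYm j))
  have hinner_bdd : ∀ (i j : Fin n) ω, ‖⟪g (Xs i ω), g (Xs j ω)⟫‖ ≤ 4 := by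
    intro i j ω
    calc ‖⟪g (Xs i ω), g (Xs j ω)⟫‖ ≤ ‖g (Xs i ω)‖ * ‖g (Xs j ω)‖ := norm_inner_le_norm _ _
      _ ≤ 2 * 2 := by
          exact mul_le_mul (hg_bdd _) (hg_bdd _) (norm_nonneg _) (by norm_num)
      _ = 4 := by norm_num
  have hinner_int : ∀ i j : Fin n,
      Integrable (fun ω => ⟪g (Xs i ω), g (Xs j ω)⟫) μ := fun i j =>
    integrable_of_bdd' (hinner_m i j).aestronglyMeasurable 4 (hinner_bdd i j)
  -- diagonal terms
  have hdiag : ∀ i : Fin n, ∫ ω, ⟪g (Xs i ω), g (Xs i ω)⟫ ∂μ ≤ 1 := by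
    intro i
    have hGm0 : StronglyMeasurable (fun x : X => ⟪g x, g x⟫) :=
      continuous_inner.comp_stronglyMeasurable (hgm.prodMk hgm)
    have hch : ∫ ω, ⟪g (Xs i ω), g (Xs i ω)⟫ ∂μ = ∫ x, ⟪g x, g x⟫ ∂P0 := by
      rw [← hlaw i]
      exact (integral_map (hmeas i).aemeasurable hGm0.aestronglyMeasurable).symm
    rw [hch]
    have hφn_int : Integrable (fun x => ‖φ x‖ ^ 2) P0 :=
      integrable_of_bdd' (hφ.norm.pow 2).aestronglyMeasurable 1
        (fun x => by
          rw [Real.norm_eq_abs, abs_of_nonneg (sq_nonneg _)]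
          nlinarith [hbdd x, norm_nonneg (φ x)])
    have hinnφ_m : StronglyMeasurable (fun x : X => ⟪m0, φ x⟫) :=
      continuous_inner.comp_stronglyMeasurable (stronglyMeasurable_const.prodMk hφ)
    have hinnφ_int : Integrable (fun x => ⟪m0, φ x⟫) P0 :=
      integrable_of_bdd' hinnφ_m.aestronglyMeasurable 1
        (fun x => by
          have h1 := norm_inner_le_norm (𝕜 := ℝ) m0 (φ x)
          nlinarith [hbdd x, hm0_le, norm_nonneg m0, norm_nonneg (φ x)])
    have hexp : (fun x => ⟪g x, g x⟫) =
        fun x => (‖φ x‖ ^ 2 - 2 * ⟪m0, φ x⟫) + ‖m0‖ ^ 2 := by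
      funext x
      rw [real_inner_self_eq_norm_sq, hg]
      rw [norm_sub_sq_real]
      rw [real_inner_comm]
    have j1 : Integrable (fun x => ‖φ x‖ ^ 2 - 2 * ⟪m0, φ x⟫) P0 :=
      hφn_int.sub (hinnφ_int.const_mul 2)
    have j2 : Integrable (fun x => 2 * ⟪m0, φ x⟫) P0 := hinnφ_int.const_mul 2
    rw [hexp, integral_add j1 (integrable_const _),
      integral_sub hφn_int j2, integral_const_mul, integral_const,
      integral_inner hφ_int m0, ← hm0, real_inner_self_eq_norm_sq]
    have hφn_le : ∫ x, ‖φ x‖ ^ 2 ∂P0 ≤ 1 := by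
      have : ∫ x, ‖φ x‖ ^ 2 ∂P0 ≤ ∫ _x, (1 : ℝ) ∂P0 := by
        refine integral_mono hφn_int (integrable_const 1) (fun x => ?_)
        nlinarith [hbdd x, norm_nonneg (φ x)]
      simpa using this
    have h0 := sq_nonneg ‖m0‖
    simp only [probReal_univ, smul_eq_mul, one_mul]
    nlinarith
  -- cross terms vanish
  have hcross : ∀ i j : Fin n, i ≠ j → ∫ ω, ⟪g (Xs i ω), g (Xs j ω)⟫ ∂μ = 0 := by
    intro i j hij
    have hpair : Measure.map (fun ω => (Xs i ω, Xs j ω)) μ = P0.prod P0 := by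
      have h := hindep.indepFun hij
      rw [ProbabilityTheory.indepFun_iff_map_prod_eq_prod_map_map (hmeas i).aemeasurable
        (hmeas j).aemeasurable] at h
      rw [h, hlaw i, hlaw j]
    have hGm : StronglyMeasurable (fun p : X × X => ⟪g p.1, g p.2⟫) :=
      continuous_inner.comp_stronglyMeasurable
        ((hgm.comp_measurable measurable_fst).prodMk (hgm.comp_measurable measurable_snd))
    have hch : ∫ ω, ⟪g (Xs i ω), g (Xs j ω)⟫ ∂μ
        = ∫ p : X × X, ⟪g p.1, g p.2⟫ ∂(P0.prod P0) := by
      rw [← hpair]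
      exact (integral_map ((hmeas i).prodMk (hmeas j)).aemeasurable
        hGm.aestronglyMeasurable).symm
    rw [hch]
    have hGint : Integrable (fun p : X × X => ⟪g p.1, g p.2⟫) (P0.prod P0) :=
      integrable_of_bdd' hGm.aestronglyMeasurable 4 (fun p => by
        have := norm_inner_le_norm (𝕜 := ℝ) (g p.1) (g p.2)
        nlinarith [hg_bdd p.1, hg_bdd p.2, norm_nonneg (g p.1), norm_nonneg (g p.2)])
    rw [integral_prod _ hGint]
    have hin : ∀ x : X, ∫ y, ⟪g x, g y⟫ ∂P0 = 0 := by
      intro x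
      rw [integral_inner hg_int (g x), hg_mean, inner_zero_right]
    simp [hin]
  -- second moment of T
  have hTsq_int : Integrable (fun ω => ‖T ω‖ ^ 2) μ :=
    integrable_of_bdd' (hTm.norm.pow 2).aestronglyMeasurable ((2 * n) ^ 2)
      (fun ω => by
        rw [Real.norm_eq_abs, abs_of_nonneg (sq_nonneg _)]
        nlinarith [hT_bdd ω, norm_nonneg (T ω)])
  have hT2 : ∫ ω, ‖T ω‖ ^ 2 ∂μ ≤ n := by
    have hexp : (fun ω => ‖T ω‖ ^ 2)
        = fun ω => ∑ i : Fin n, ∑ j : Fin n, ⟪g (Xs i ω), g (Xs j ω)⟫ := by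
      funext ω
      rw [← real_inner_self_eq_norm_sq, hT, sum_inner]
      exact Finset.sum_congr rfl fun i _ => inner_sum _ _ _
    rw [hexp, integral_finset_sum _ (fun i _ => integrable_finset_sum _
      (fun j _ => hinner_int i j))]
    have hrow : ∀ i : Fin n,
        ∫ ω, ∑ j : Fin n, ⟪g (Xs i ω), g (Xs j ω)⟫ ∂μ ≤ 1 := by
      intro i
      rw [integral_finset_sum _ fun j _ => hinner_int i j]
      have : ∑ j : Fin n, ∫ ω, ⟪g (Xs i ω), g (Xs j ω)⟫ ∂μ
          = ∫ ω, ⟪g (Xs i ω), g (Xs i ω)⟫ ∂μ :=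
        Finset.sum_eq_single_of_mem i (Finset.mem_univ i)
          (fun j _ hji => hcross i j (Ne.symm hji))
      rw [this]
      exact hdiag i
    calc ∑ i : Fin n, ∫ ω, ∑ j : Fin n, ⟪g (Xs i ω), g (Xs j ω)⟫ ∂μ
        ≤ ∑ _i : Fin n, (1 : ℝ) := Finset.sum_le_sum fun i _ => hrow i
      _ = n := by simp
  -- first moment of T
  have hTn_int : Integrable (fun ω => ‖T ω‖) μ :=
    integrable_of_bdd' hTm.norm.aestronglyMeasurable (2 * n)
      (fun ω => by simpa using hT_bdd ω)
  have hT1 : ∫ ω, ‖T ω‖ ∂μ ≤ Real.sqrt n := by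
    have hcs := sq_integral_le_integral_sq' hTn_int hTsq_int
    have hnn : 0 ≤ ∫ ω, ‖T ω‖ ∂μ := integral_nonneg fun ω => norm_nonneg _
    calc ∫ ω, ‖T ω‖ ∂μ = Real.sqrt ((∫ ω, ‖T ω‖ ∂μ) ^ 2) := (Real.sqrt_sq hnn).symm
      _ ≤ Real.sqrt (∫ ω, ‖T ω‖ ^ 2 ∂μ) := Real.sqrt_le_sqrt hcs
      _ ≤ Real.sqrt n := Real.sqrt_le_sqrt hT2
  -- expected MMD between empirical measure and P0
  have hA_int : Integrable (fun ω => ‖S ω - m0‖) μ := by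
    have : (fun ω => ‖S ω - m0‖) = fun ω => (n : ℝ)⁻¹ * ‖T ω‖ := by
      funext ω
      have hpos : (0:ℝ) ≤ (n : ℝ)⁻¹ := inv_nonneg.2 (Nat.cast_nonneg n)
      rw [hSm0 ω, norm_smul, Real.norm_eq_abs, abs_of_nonneg hpos]
    rw [this]
    exact hTn_int.const_mul _
  have hEA : ∫ ω, ‖S ω - m0‖ ∂μ ≤ 1 / Real.sqrt n := by
    have heq : (fun ω => ‖S ω - m0‖) = fun ω => (n : ℝ)⁻¹ * ‖T ω‖ := by
      funext ω
      have hpos : (0:ℝ) ≤ (n : ℝ)⁻¹ := inv_nonneg.2 (Nat.cast_nonneg n)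
      rw [hSm0 ω, norm_smul, Real.norm_eq_abs, abs_of_nonneg hpos]
    rw [heq, integral_const_mul]
    have hsq : Real.sqrt n * Real.sqrt n = n := Real.mul_self_sqrt (Nat.cast_nonneg n)
    have hspos : 0 < Real.sqrt n := Real.sqrt_pos.2 (by exact_mod_cast hn)
    have hne : (n : ℝ) ≠ 0 := Nat.cast_ne_zero.2 hn.ne'
    have hkey : (n : ℝ)⁻¹ * Real.sqrt n = 1 / Real.sqrt n := by
      rw [eq_div_iff hspos.ne', mul_assoc, hsq, inv_mul_cancel₀ hne]
    calc (n : ℝ)⁻¹ * ∫ ω, ‖T ω‖ ∂μ ≤ (n : ℝ)⁻¹ * Real.sqrt n := by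
          exact mul_le_mul_of_nonneg_left hT1 (inv_nonneg.2 (Nat.cast_nonneg n))
      _ = 1 / Real.sqrt n := hkey
  -- pointwise triangle inequality
  have hpt : ∀ ω θ, ‖(∫ x, φ x ∂(Pθ (θhat ω))) - m0‖
      ≤ ‖(∫ x, φ x ∂(Pθ θ)) - m0‖ + 2 * ‖S ω - m0‖ := by
    intro ω θ
    have h1 : ‖(∫ x, φ x ∂(Pθ (θhat ω))) - m0‖
        ≤ ‖(∫ x, φ x ∂(Pθ (θhat ω))) - S ω‖ + ‖S ω - m0‖ := by
      simpa using norm_sub_le_norm_sub_add_norm_sub (∫ x, φ x ∂(Pθ (θhat ω))) (S ω) m0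
    have h2 : ‖(∫ x, φ x ∂(Pθ (θhat ω))) - S ω‖ ≤ ‖(∫ x, φ x ∂(Pθ θ)) - S ω‖ := hargmin ω θ
    have h3 : ‖(∫ x, φ x ∂(Pθ θ)) - S ω‖
        ≤ ‖(∫ x, φ x ∂(Pθ θ)) - m0‖ + ‖m0 - S ω‖ := by
      simpa using norm_sub_le_norm_sub_add_norm_sub (∫ x, φ x ∂(Pθ θ)) m0 (S ω)
    have h4 : ‖m0 - S ω‖ = ‖S ω - m0‖ := norm_sub_rev _ _
    linarith
  -- integrability of the LHS
  have hLHS_int : Integrable (fun ω => ‖(∫ x, φ x ∂(Pθ (θhat ω))) - m0‖) μ := by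
    refine integrable_of_bdd' hmeas' 2 (fun ω => ?_)
    have := norm_sub_le (∫ x, φ x ∂(Pθ (θhat ω))) m0
    have h1 := hmθ_le (θhat ω)
    simp only [Real.norm_eq_abs, abs_of_nonneg (norm_nonneg _)]
    linarith
  -- integrate the pointwise bound
  have hint : ∀ θ, ∫ ω, ‖(∫ x, φ x ∂(Pθ (θhat ω))) - m0‖ ∂μ
      ≤ ‖(∫ x, φ x ∂(Pθ θ)) - m0‖ + 2 * ∫ ω, ‖S ω - m0‖ ∂μ := by
    intro θ
    have hrhs_int : Integrable
        (fun ω => ‖(∫ x, φ x ∂(Pθ θ)) - m0‖ + 2 * ‖S ω - m0‖) μ :=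
      (integrable_const _).add (hA_int.const_mul 2)
    have := integral_mono hLHS_int hrhs_int (fun ω => hpt ω θ)
    rwa [integral_add (integrable_const _) (hA_int.const_mul 2), integral_const,
      integral_const_mul, probReal_univ, one_smul] at this
  -- pass to the infimum
  have hInf : ∫ ω, ‖(∫ x, φ x ∂(Pθ (θhat ω))) - m0‖ ∂μ
      ≤ (⨅ θ, ‖(∫ x, φ x ∂(Pθ θ)) - m0‖) + 2 * ∫ ω, ‖S ω - m0‖ ∂μ := by
    rw [← sub_le_iff_le_add]
    refine le_ciInf fun θ => ?_
    have := hint θ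
    linarith
  refine hInf.trans ?_
  have h2EA : 2 * ∫ ω, ‖S ω - m0‖ ∂μ ≤ 2 / Real.sqrt n := by
    rw [div_eq_mul_one_div]
    linarith [hEA]
  linarith
end

section
/- Huber-type robustness of MMD minimizers: if the data-generating distribution is the contamination P⁰ = (1−α) P_{θ*} + α Q for some θ* ∈ Θ, contamination rate α ∈ [0,1], and arbitrary Q, and the kernel is bounded by 1, then inf_{θ∈Θ} D(P_θ, P⁰) ≤ D(P_{θ*}, P⁰) ≤ 2α. Consequently any exact MMD minimizer θ̂ over the empirical measure of an i.i.d. sample of size n from P⁰ satisfies E[D(P_{θ̂}, P_{θ*})] ≤ 4α + 2/√n. -/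
open MeasureTheory ProbabilityTheory
open scoped RealInnerProductSpace

set_option maxHeartbeats 1000000 in
theorem mmd_huber_robustness {Ω : Type*} [MeasurableSpace Ω]
    {X : Type*} [MeasurableSpace X] {H : Type*}
    [NormedAddCommGroup H] [InnerProductSpace ℝ H] [CompleteSpace H]
    {Θ : Type*} [Nonempty Θ]
    (μ : Measure Ω) [IsProbabilityMeasure μ]
    (φ : X → H) (hφ : MeasureTheory.StronglyMeasurable φ) (hbdd : ∀ x, ‖φ x‖ ≤ 1)
    (Pθ : Θ → Measure X) [∀ θ, IsProbabilityMeasure (Pθ θ)]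
    (θstar : Θ) (Q : Measure X) [IsProbabilityMeasure Q]
    (α : ℝ) (hα : α ∈ Set.Icc (0 : ℝ) 1)
    (P0 : Measure X)
    (hP0 : P0 = ENNReal.ofReal (1 - α) • Pθ θstar + ENNReal.ofReal α • Q)
    (n : ℕ) (hn : 0 < n) (Xs : Fin n → Ω → X)
    (hmeas : ∀ i, Measurable (Xs i))
    (hlaw : ∀ i, Measure.map (Xs i) μ = P0)
    (hindep : ProbabilityTheory.iIndepFun
      (m := fun _ : Fin n => (inferInstance : MeasurableSpace X)) Xs μ)
    (θhat : Ω → Θ)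
    (hargmin : ∀ ω θ,
      ‖(∫ x, φ x ∂(Pθ (θhat ω))) - (n : ℝ)⁻¹ • ∑ i, φ (Xs i ω)‖ ≤
        ‖(∫ x, φ x ∂(Pθ θ)) - (n : ℝ)⁻¹ • ∑ i, φ (Xs i ω)‖)
    (hmeas' : AEStronglyMeasurable
      (fun ω => ‖(∫ x, φ x ∂(Pθ (θhat ω))) - ∫ x, φ x ∂(Pθ θstar)‖) μ) :
    (⨅ θ, ‖(∫ x, φ x ∂(Pθ θ)) - ∫ x, φ x ∂P0‖) ≤
        ‖(∫ x, φ x ∂(Pθ θstar)) - ∫ x, φ x ∂P0‖ ∧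
    ‖(∫ x, φ x ∂(Pθ θstar)) - ∫ x, φ x ∂P0‖ ≤ 2 * α ∧
    ∫ ω, ‖(∫ x, φ x ∂(Pθ (θhat ω))) - ∫ x, φ x ∂(Pθ θstar)‖ ∂μ ≤
      4 * α + 2 / Real.sqrt n := by
  obtain ⟨hα0, hα1⟩ := hα
  -- basic integrability and boundedness facts
  have hint : ∀ (ν : Measure X) [IsProbabilityMeasure ν], Integrable φ ν := fun ν _ =>
    (integrable_const (1:ℝ)).mono' hφ.aestronglyMeasurable (ae_of_all _ hbdd)
  have hnorm : ∀ (ν : Measure X) [IsProbabilityMeasure ν], ‖∫ x, φ x ∂ν‖ ≤ 1 := by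
    intro ν _
    calc ‖∫ x, φ x ∂ν‖ ≤ 1 * (ν Set.univ).toReal :=
          norm_integral_le_of_norm_le_const (ae_of_all _ hbdd)
      _ = 1 := by simp
  haveI : IsProbabilityMeasure P0 := by
    rw [hP0]; constructor
    simp only [Measure.add_apply, Measure.smul_apply, smul_eq_mul, measure_univ, mul_one]
    rw [← ENNReal.ofReal_add (by linarith) hα0]; norm_num
  -- decomposition of the mean embedding of P0
  have hM0 : ∫ x, φ x ∂P0 = (1-α) • (∫ x, φ x ∂(Pθ θstar)) + α • (∫ x, φ x ∂Q) := by
    rw [hP0, integral_add_measure ((hint _).smul_measure ENNReal.ofReal_ne_top)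
        ((hint _).smul_measure ENNReal.ofReal_ne_top),
      integral_smul_measure, integral_smul_measure,
      ENNReal.toReal_ofReal (by linarith), ENNReal.toReal_ofReal hα0]
  have hdiff : (∫ x, φ x ∂(Pθ θstar)) - ∫ x, φ x ∂P0
      = α • ((∫ x, φ x ∂(Pθ θstar)) - ∫ x, φ x ∂Q) := by
    rw [hM0]; module
  have h2 : ‖(∫ x, φ x ∂(Pθ θstar)) - ∫ x, φ x ∂P0‖ ≤ 2 * α := by
    rw [hdiff, norm_smul, Real.norm_of_nonneg hα0]
    have : ‖(∫ x, φ x ∂(Pθ θstar)) - ∫ x, φ x ∂Q‖ ≤ 2 := by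
      calc ‖(∫ x, φ x ∂(Pθ θstar)) - ∫ x, φ x ∂Q‖
          ≤ ‖∫ x, φ x ∂(Pθ θstar)‖ + ‖∫ x, φ x ∂Q‖ := norm_sub_le _ _
        _ ≤ 2 := by have := hnorm (Pθ θstar); have := hnorm Q; linarith
    nlinarith
  refine ⟨ciInf_le ⟨0, by rintro x ⟨θ, rfl⟩; positivity⟩ θstar, h2, ?_⟩
  -- Part 3
  have hn0 : (n:ℝ) ≠ 0 := Nat.cast_ne_zero.mpr hn.ne'
  set Mθs := ∫ x, φ x ∂(Pθ θstar) with hMθs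
  set m := ∫ x, φ x ∂P0 with hm
  have hm1 : ‖m‖ ≤ 1 := hnorm P0
  have hMθs1 : ‖Mθs‖ ≤ 1 := hnorm _
  set S : Ω → H := fun ω => (n : ℝ)⁻¹ • ∑ i, φ (Xs i ω) with hS
  have hSmeas : StronglyMeasurable S :=
    (Finset.stronglyMeasurable_fun_sum _ (fun i _ => hφ.comp_measurable (hmeas i))).const_smul _
  have hSbd : ∀ ω, ‖S ω‖ ≤ 1 := by
    intro ω
    calc ‖S ω‖ ≤ (n:ℝ)⁻¹ * ∑ i, ‖φ (Xs i ω)‖ := by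
          rw [hS, norm_smul, Real.norm_of_nonneg (by positivity)]
          gcongr
          exact norm_sum_le _ _
      _ ≤ (n:ℝ)⁻¹ * ∑ _i : Fin n, (1:ℝ) := by gcongr with i; exact hbdd _
      _ = 1 := by simp [inv_mul_cancel₀ hn0]
  -- h ω = ‖S ω - m‖
  set h : Ω → ℝ := fun ω => ‖S ω - m‖ with hh
  have hhmeas : StronglyMeasurable h := (hSmeas.sub stronglyMeasurable_const).norm
  have hhbd : ∀ ω, ‖h ω‖ ≤ 2 := fun ω => by
    rw [hh, norm_norm]
    calc ‖S ω - m‖ ≤ ‖S ω‖ + ‖m‖ := norm_sub_le _ _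
      _ ≤ 2 := by have := hSbd ω; linarith
  have ih : Integrable h μ :=
    (integrable_const (2:ℝ)).mono' hhmeas.aestronglyMeasurable (ae_of_all _ hhbd)
  have ih2 : Integrable (fun ω => (h ω)^2) μ :=
    (integrable_const (4:ℝ)).mono' (hhmeas.measurable.pow_const 2).aestronglyMeasurable
      (ae_of_all _ fun ω => by
        have := hhbd ω; rw [norm_norm] at this
        rw [Real.norm_of_nonneg (by positivity)]; nlinarith [norm_nonneg (S ω - m)])
  -- diagonal terms
  have hdiag : ∀ i : Fin n, ∫ ω, ‖φ (Xs i ω) - m‖^2 ∂μ ≤ 1 := by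
    intro i
    have hmsm : StronglyMeasurable (fun x : X => ‖φ x - m‖^2) :=
      (((hφ.sub stronglyMeasurable_const).norm).measurable.pow_const 2).stronglyMeasurable
    have hmapi : ∫ ω, ‖φ (Xs i ω) - m‖^2 ∂μ = ∫ x, ‖φ x - m‖^2 ∂P0 := by
      rw [← hlaw i, integral_map (hmeas i).aemeasurable hmsm.aestronglyMeasurable]
    have i1 : Integrable (fun x => ‖φ x‖^2) P0 :=
      (integrable_const (1:ℝ)).mono' (hφ.norm.measurable.pow_const 2).aestronglyMeasurable
        (ae_of_all _ fun x => by
          rw [Real.norm_of_nonneg (by positivity)]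
          nlinarith [hbdd x, norm_nonneg (φ x)])
    have ig : Integrable (fun x => ⟪m, φ x⟫) P0 :=
      (integrable_const (1:ℝ)).mono' (stronglyMeasurable_const.inner hφ).aestronglyMeasurable
        (ae_of_all _ fun x => by
          calc ‖⟪m, φ x⟫‖ ≤ ‖m‖ * ‖φ x‖ := norm_inner_le_norm _ _
            _ ≤ 1 * 1 := by
                have := hbdd x; have := norm_nonneg (φ x); have := norm_nonneg m; nlinarith
            _ = 1 := by norm_num)
    have e1 : ∫ x, ‖φ x - m‖^2 ∂P0 = (∫ x, ‖φ x‖^2 ∂P0) - ‖m‖^2 := by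
      have hptw : ∀ x, ‖φ x - m‖^2 = ‖φ x‖^2 - 2 * ⟪m, φ x⟫ + ‖m‖^2 := fun x => by
        rw [norm_sub_sq_real, real_inner_comm]
      have isub : Integrable (fun x => ‖φ x‖^2 - 2 * ⟪m, φ x⟫) P0 := i1.sub (ig.const_mul 2)
      simp_rw [hptw]
      rw [integral_add isub (integrable_const _),
        integral_sub i1 (ig.const_mul 2), integral_const_mul, integral_inner (hint P0) m,
        integral_const, real_inner_self_eq_norm_sq]
      simp only [measure_univ, probReal_univ, ENNReal.toReal_one, smul_eq_mul, one_mul, ← hm]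
      ring
    have e2 : ∫ x, ‖φ x‖^2 ∂P0 ≤ 1 := by
      calc ∫ x, ‖φ x‖^2 ∂P0 ≤ ∫ _x, (1:ℝ) ∂P0 :=
            integral_mono i1 (integrable_const 1) (fun x => by nlinarith [hbdd x, norm_nonneg (φ x)])
        _ = 1 := by simp
    rw [hmapi, e1]
    nlinarith [sq_nonneg ‖m‖]
  -- cross terms vanish
  have iij : ∀ i j : Fin n, Integrable (fun ω => ⟪φ (Xs i ω) - m, φ (Xs j ω) - m⟫) μ := by
    intro i j
    refine (integrable_const (4:ℝ)).mono'
      (((hφ.comp_measurable (hmeas i)).sub stronglyMeasurable_const).inner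
        ((hφ.comp_measurable (hmeas j)).sub stronglyMeasurable_const)).aestronglyMeasurable
      (ae_of_all _ fun ω => ?_)
    calc ‖⟪φ (Xs i ω) - m, φ (Xs j ω) - m⟫‖ ≤ ‖φ (Xs i ω) - m‖ * ‖φ (Xs j ω) - m‖ :=
          norm_inner_le_norm _ _
      _ ≤ 2 * 2 := by
          have a1 : ‖φ (Xs i ω) - m‖ ≤ 2 := by
            have := norm_sub_le (φ (Xs i ω)) m; have := hbdd (Xs i ω); linarith
          have a2 : ‖φ (Xs j ω) - m‖ ≤ 2 := by
            have := norm_sub_le (φ (Xs j ω)) m; have := hbdd (Xs j ω); linarith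
          exact mul_le_mul a1 a2 (norm_nonneg _) (by norm_num)
      _ = 4 := by norm_num
  have hY0 : ∫ y, (φ y - m) ∂P0 = 0 := by
    rw [integral_sub (hint P0) (integrable_const m), integral_const]
    simp [hm]
  have hzero : ∀ i j : Fin n, i ≠ j → ∫ ω, ⟪φ (Xs i ω) - m, φ (Xs j ω) - m⟫ ∂μ = 0 := by
    intro i j hij
    have hind := hindep.indepFun hij
    have hmap : μ.map (fun ω => (Xs i ω, Xs j ω)) = P0.prod P0 := by
      have hh := (indepFun_iff_map_prod_eq_prod_map_map (hmeas i).aemeasurable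
        (hmeas j).aemeasurable).mp hind
      rwa [hlaw i, hlaw j] at hh
    have hsm : StronglyMeasurable (fun p : X × X => ⟪φ p.1 - m, φ p.2 - m⟫) :=
      ((hφ.comp_measurable measurable_fst).sub stronglyMeasurable_const).inner
        ((hφ.comp_measurable measurable_snd).sub stronglyMeasurable_const)
    have step : ∫ ω, ⟪φ (Xs i ω) - m, φ (Xs j ω) - m⟫ ∂μ
        = ∫ p : X × X, ⟪φ p.1 - m, φ p.2 - m⟫ ∂(P0.prod P0) := by
      rw [← hmap, integral_map ((hmeas i).prodMk (hmeas j)).aemeasurable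
        hsm.aestronglyMeasurable]
    rw [step]
    have hintp : Integrable (fun p : X × X => ⟪φ p.1 - m, φ p.2 - m⟫) (P0.prod P0) := by
      refine (integrable_const (4:ℝ)).mono' hsm.aestronglyMeasurable (ae_of_all _ fun p => ?_)
      calc ‖⟪φ p.1 - m, φ p.2 - m⟫‖ ≤ ‖φ p.1 - m‖ * ‖φ p.2 - m‖ := norm_inner_le_norm _ _
        _ ≤ 2 * 2 := by
            have a1 : ‖φ p.1 - m‖ ≤ 2 := by
              have := norm_sub_le (φ p.1) m; have := hbdd p.1; linarith
            have a2 : ‖φ p.2 - m‖ ≤ 2 := by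
              have := norm_sub_le (φ p.2) m; have := hbdd p.2; linarith
            exact mul_le_mul a1 a2 (norm_nonneg _) (by norm_num)
        _ = 4 := by norm_num
    rw [integral_prod _ hintp]
    have iY : Integrable (fun y => φ y - m) P0 := (hint P0).sub (integrable_const m)
    have inner0 : ∀ x : X, ∫ y, ⟪φ x - m, φ y - m⟫ ∂P0 = 0 := fun x => by
      rw [integral_inner iY, hY0, inner_zero_right]
    simp [inner0]
  -- representation of S ω - m
  have hrepr : ∀ ω, S ω - m = (n:ℝ)⁻¹ • ∑ i, (φ (Xs i ω) - m) := by
    intro ω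
    simp only [hS]
    rw [Finset.sum_sub_distrib, smul_sub, Finset.sum_const, Finset.card_univ, Fintype.card_fin]
    congr 1
    rw [← Nat.cast_smul_eq_nsmul ℝ, smul_smul, inv_mul_cancel₀ hn0, one_smul]
  have key : ∫ ω, (h ω)^2 ∂μ
      = (n:ℝ)⁻¹^2 * ∑ i, ∑ j, ∫ ω, ⟪φ (Xs i ω) - m, φ (Xs j ω) - m⟫ ∂μ := by
    have hptw : ∀ ω, (h ω)^2
        = (n:ℝ)⁻¹^2 * ∑ i, ∑ j, ⟪φ (Xs i ω) - m, φ (Xs j ω) - m⟫ := by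
      intro ω
      calc (h ω)^2 = ((n:ℝ)⁻¹)^2 * ‖∑ i, (φ (Xs i ω) - m)‖^2 := by
            simp only [hh]
            rw [hrepr ω, norm_smul, mul_pow, Real.norm_of_nonneg (by positivity)]
        _ = _ := by
            rw [← real_inner_self_eq_norm_sq, sum_inner]
            congr 1
            exact Finset.sum_congr rfl fun i _ => inner_sum _ _ _
    simp_rw [hptw]
    rw [integral_const_mul,
      integral_finset_sum _ (fun i _ => integrable_finset_sum _ (fun j _ => iij i j))]
    congr 1
    exact Finset.sum_congr rfl fun i _ => integral_finset_sum _ (fun j _ => iij i j)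
  have hsum : ∫ ω, (h ω)^2 ∂μ ≤ (n:ℝ)⁻¹ := by
    rw [key]
    have hij : ∀ i : Fin n, ∑ j, ∫ ω, ⟪φ (Xs i ω) - m, φ (Xs j ω) - m⟫ ∂μ ≤ 1 := by
      intro i
      rw [Finset.sum_eq_single_of_mem i (Finset.mem_univ i)
        (fun j _ hj => hzero i j (Ne.symm hj))]
      calc ∫ ω, ⟪φ (Xs i ω) - m, φ (Xs i ω) - m⟫ ∂μ
          = ∫ ω, ‖φ (Xs i ω) - m‖^2 ∂μ := by simp_rw [real_inner_self_eq_norm_sq]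
        _ ≤ 1 := hdiag i
    calc (n:ℝ)⁻¹^2 * ∑ i, ∑ j, ∫ ω, ⟪φ (Xs i ω) - m, φ (Xs j ω) - m⟫ ∂μ
        ≤ (n:ℝ)⁻¹^2 * ∑ _i : Fin n, (1:ℝ) := by
          refine mul_le_mul_of_nonneg_left (Finset.sum_le_sum fun i _ => hij i) (by positivity)
      _ = (n:ℝ)⁻¹ := by
          simp only [Finset.sum_const, Finset.card_univ, Fintype.card_fin, nsmul_eq_mul, mul_one]
          rw [sq, mul_assoc, inv_mul_cancel₀ hn0, mul_one]
  -- Cauchy-Schwarz: (∫ h)^2 ≤ ∫ h^2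
  set r := ∫ ω, h ω ∂μ with hr
  have hr0 : 0 ≤ r := integral_nonneg fun ω => norm_nonneg _
  have hCS : r^2 ≤ ∫ ω, (h ω)^2 ∂μ := by
    have h0 : (0:ℝ) ≤ ∫ ω, (h ω - r)^2 ∂μ := integral_nonneg fun ω => sq_nonneg _
    have hexp : ∫ ω, (h ω - r)^2 ∂μ = (∫ ω, (h ω)^2 ∂μ) - r^2 := by
      have hptw : ∀ ω, (h ω - r)^2 = (h ω)^2 - (2*r) * h ω + r^2 := fun ω => by ring
      have isub : Integrable (fun ω => (h ω)^2 - (2*r) * h ω) μ := ih2.sub (ih.const_mul _)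
      simp_rw [hptw]
      rw [integral_add isub (integrable_const _),
        integral_sub ih2 (ih.const_mul _), integral_const_mul, integral_const]
      simp only [measure_univ, probReal_univ, ENNReal.toReal_one, smul_eq_mul, one_mul, ← hr]
      try ring
    linarith [hexp ▸ h0]
  have hrle : r ≤ 2⁻¹ * (2 / Real.sqrt n) := by
    have hsq : (0:ℝ) < Real.sqrt n :=
      Real.sqrt_pos.mpr (by exact_mod_cast hn)
    have : r ≤ Real.sqrt ((n:ℝ)⁻¹) := by
      rw [show Real.sqrt ((n:ℝ)⁻¹) = Real.sqrt ((n:ℝ)⁻¹) from rfl]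
      have := Real.sqrt_le_sqrt (le_trans hCS hsum)
      rwa [Real.sqrt_sq hr0] at this
    calc r ≤ Real.sqrt ((n:ℝ)⁻¹) := this
      _ = (Real.sqrt n)⁻¹ := by rw [Real.sqrt_inv]
      _ = 2⁻¹ * (2 / Real.sqrt n) := by
          field_simp
  -- pointwise bound and conclusion
  have hpt : ∀ ω, ‖(∫ x, φ x ∂(Pθ (θhat ω))) - Mθs‖ ≤ 2 * h ω + 4 * α := by
    intro ω
    have t1 : ‖(∫ x, φ x ∂(Pθ (θhat ω))) - Mθs‖
        ≤ ‖(∫ x, φ x ∂(Pθ (θhat ω))) - S ω‖ + ‖S ω - Mθs‖ := by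
      have := norm_sub_le_norm_sub_add_norm_sub (∫ x, φ x ∂(Pθ (θhat ω))) (S ω) Mθs
      exact this
    have t2 : ‖(∫ x, φ x ∂(Pθ (θhat ω))) - S ω‖ ≤ ‖Mθs - S ω‖ := hargmin ω θstar
    have t3 : ‖Mθs - S ω‖ ≤ h ω + 2 * α := by
      calc ‖Mθs - S ω‖ ≤ ‖Mθs - m‖ + ‖m - S ω‖ := norm_sub_le_norm_sub_add_norm_sub _ _ _
        _ ≤ 2 * α + h ω := by
            have : ‖m - S ω‖ = h ω := by
              simp only [hh]; rw [← norm_neg]; congr 1; abel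
            rw [this]
            exact add_le_add_left h2 _
        _ = h ω + 2 * α := by ring
    have t4 : ‖S ω - Mθs‖ ≤ h ω + 2 * α := by
      rw [← norm_neg]
      have : -(S ω - Mθs) = Mθs - S ω := by abel
      rw [this]; exact t3
    calc ‖(∫ x, φ x ∂(Pθ (θhat ω))) - Mθs‖
        ≤ ‖(∫ x, φ x ∂(Pθ (θhat ω))) - S ω‖ + ‖S ω - Mθs‖ := t1
      _ ≤ (h ω + 2 * α) + (h ω + 2 * α) := add_le_add (t2.trans t3) t4
      _ = 2 * h ω + 4 * α := by ring
  have fint : Integrable (fun ω => ‖(∫ x, φ x ∂(Pθ (θhat ω))) - Mθs‖) μ := by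
    refine (integrable_const (2:ℝ)).mono' hmeas' (ae_of_all _ fun ω => ?_)
    rw [norm_norm]
    calc ‖(∫ x, φ x ∂(Pθ (θhat ω))) - Mθs‖ ≤ ‖∫ x, φ x ∂(Pθ (θhat ω))‖ + ‖Mθs‖ := norm_sub_le _ _
      _ ≤ 2 := by have := hnorm (Pθ (θhat ω)); linarith
  have gint : Integrable (fun ω => 2 * h ω + 4 * α) μ :=
    (ih.const_mul 2).add (integrable_const _)
  calc ∫ ω, ‖(∫ x, φ x ∂(Pθ (θhat ω))) - Mθs‖ ∂μ
      ≤ ∫ ω, (2 * h ω + 4 * α) ∂μ := integral_mono fint gint hpt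
    _ = 2 * r + 4 * α := by
        rw [integral_add (ih.const_mul 2) (integrable_const _), integral_const_mul,
          integral_const]
        simp [← hr]
    _ ≤ 2 * (2⁻¹ * (2 / Real.sqrt n)) + 4 * α := by
        have := hrle; nlinarith
    _ = 4 * α + 2 / Real.sqrt n := by ring
end

section
/- Mixture decomposition of the regression MMD criterion: for data points (X₁,Y₁),…,(Xₙ,Yₙ) and a product kernel k((x,y),(x',y')) = 1_{x=x'} k_Y(y,y'), the global criterion D²((1/n)Σᵢ δ_{Xᵢ}⊗P_{β(Xᵢ,θ)}, (1/n)Σᵢ δ_{Xᵢ}⊗δ_{Yᵢ}) equals (1/n²) Σᵢ D_Y²(P_{β(Xᵢ,θ)}, δ_{Yᵢ}) when the Xᵢ are pairwise distinct, where D_Y is the MMD on Y for kernel k_Y; in particular minimizing the global criterion is then equivalent to minimizing (1/n)Σᵢ D_Y²(P_{β(Xᵢ,θ)}, δ_{Yᵢ}) up to the factor 1/n. -/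
open MeasureTheory
open scoped RealInnerProductSpace

private theorem inner_integral_left' {α E : Type*} [MeasurableSpace α] {μ : Measure α}
    [NormedAddCommGroup E] [InnerProductSpace ℝ E] [CompleteSpace E]
    {f : α → E} (hf : Integrable f μ) (c : E) :
    ⟪∫ x, f x ∂μ, c⟫ = ∫ x, ⟪f x, c⟫ ∂μ := by
  rw [real_inner_comm, ← integral_inner hf]
  simp_rw [real_inner_comm]

theorem regression_mmd_mixture_decomposition {X Y : Type*} [DecidableEq X] [MeasurableSpace Y]
    {H HY : Type*}
    [NormedAddCommGroup H] [InnerProductSpace ℝ H] [CompleteSpace H]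
    [NormedAddCommGroup HY] [InnerProductSpace ℝ HY] [CompleteSpace HY]
    {Θ : Type*}
    (Φ : X × Y → H) (φY : Y → HY)
    (hker : ∀ x x' y y',
      ⟪Φ (x, y), Φ (x', y')⟫ = (if x = x' then (1 : ℝ) else 0) * ⟪φY y, φY y'⟫)
    (n : ℕ) (hn : 0 < n)
    (Xs : Fin n → X) (hdistinct : Function.Injective Xs)
    (Ys : Fin n → Y)
    (P : Θ → Fin n → Measure Y) [∀ θ i, IsProbabilityMeasure (P θ i)]
    (hintΦ : ∀ θ i, Integrable (fun y => Φ (Xs i, y)) (P θ i))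
    (hintY : ∀ θ i, Integrable φY (P θ i)) :
    (∀ θ : Θ,
      ‖(n : ℝ)⁻¹ • ∑ i, ((∫ y, Φ (Xs i, y) ∂(P θ i)) - Φ (Xs i, Ys i))‖ ^ 2 =
        (1 / (n : ℝ) ^ 2) * ∑ i, ‖(∫ y, φY y ∂(P θ i)) - φY (Ys i)‖ ^ 2) ∧
    (∀ θ₀ : Θ,
      (∀ θ, ‖(n : ℝ)⁻¹ • ∑ i, ((∫ y, Φ (Xs i, y) ∂(P θ₀ i)) - Φ (Xs i, Ys i))‖ ≤
            ‖(n : ℝ)⁻¹ • ∑ i, ((∫ y, Φ (Xs i, y) ∂(P θ i)) - Φ (Xs i, Ys i))‖) ↔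
      (∀ θ, (n : ℝ)⁻¹ * ∑ i, ‖(∫ y, φY y ∂(P θ₀ i)) - φY (Ys i)‖ ^ 2 ≤
            (n : ℝ)⁻¹ * ∑ i, ‖(∫ y, φY y ∂(P θ i)) - φY (Ys i)‖ ^ 2)) := by
  have hn' : (0 : ℝ) < (n : ℝ) := by exact_mod_cast hn
  -- Main computation
  have main : ∀ θ : Θ,
      ‖(n : ℝ)⁻¹ • ∑ i, ((∫ y, Φ (Xs i, y) ∂(P θ i)) - Φ (Xs i, Ys i))‖ ^ 2 =
        (1 / (n : ℝ) ^ 2) * ∑ i, ‖(∫ y, φY y ∂(P θ i)) - φY (Ys i)‖ ^ 2 := by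
    intro θ
    set v : Fin n → H := fun i => (∫ y, Φ (Xs i, y) ∂(P θ i)) - Φ (Xs i, Ys i) with hv
    set w : Fin n → HY := fun i => (∫ y, φY y ∂(P θ i)) - φY (Ys i) with hw
    have key : ∀ i j, ⟪v i, v j⟫ = (if i = j then (1 : ℝ) else 0) * ⟪w i, w j⟫ := by
      intro i j
      have hc : ∀ y y', ⟪Φ (Xs i, y), Φ (Xs j, y')⟫ =
          (if i = j then (1 : ℝ) else 0) * ⟪φY y, φY y'⟫ := by
        intro y y'
        rw [hker]
        congr 1
        by_cases h : i = j
        · simp [h]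
        · have : Xs i ≠ Xs j := fun he => h (hdistinct he)
          simp [h, this]
      have h1 : ⟪∫ y, Φ (Xs i, y) ∂(P θ i), ∫ y, Φ (Xs j, y) ∂(P θ j)⟫ =
          (if i = j then (1 : ℝ) else 0) * ⟪∫ y, φY y ∂(P θ i), ∫ y, φY y ∂(P θ j)⟫ := by
        rw [← integral_inner (hintΦ θ j), ← integral_inner (hintY θ j)]
        rw [← integral_const_mul]
        refine integral_congr_ae (Filter.Eventually.of_forall fun y' => ?_)
        dsimp only
        rw [inner_integral_left' (hintΦ θ i), inner_integral_left' (hintY θ i),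
          ← integral_const_mul]
        exact integral_congr_ae (Filter.Eventually.of_forall fun y => hc y y')
      have h2 : ⟪∫ y, Φ (Xs i, y) ∂(P θ i), Φ (Xs j, Ys j)⟫ =
          (if i = j then (1 : ℝ) else 0) * ⟪∫ y, φY y ∂(P θ i), φY (Ys j)⟫ := by
        rw [inner_integral_left' (hintΦ θ i), inner_integral_left' (hintY θ i),
          ← integral_const_mul]
        exact integral_congr_ae (Filter.Eventually.of_forall fun y => hc y (Ys j))
      have h3 : ⟪Φ (Xs i, Ys i), ∫ y, Φ (Xs j, y) ∂(P θ j)⟫ =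
          (if i = j then (1 : ℝ) else 0) * ⟪φY (Ys i), ∫ y, φY y ∂(P θ j)⟫ := by
        rw [← integral_inner (hintΦ θ j), ← integral_inner (hintY θ j), ← integral_const_mul]
        exact integral_congr_ae (Filter.Eventually.of_forall fun y' => hc (Ys i) y')
      have h4 := hc (Ys i) (Ys j)
      simp only [hv, hw, inner_sub_left, inner_sub_right, h1, h2, h3, h4]
      ring
    have hsum : ‖∑ i, v i‖ ^ 2 = ∑ i, ‖w i‖ ^ 2 := by
      have : ⟪∑ i, v i, ∑ j, v j⟫ = ∑ i, ⟪w i, w i⟫ := by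
        rw [sum_inner]
        simp_rw [inner_sum, key]
        rw [Finset.sum_congr rfl fun i _ => Finset.sum_eq_single i
          (fun j _ hj => by simp [Ne.symm hj]) (by simp)]
        simp
      rw [← real_inner_self_eq_norm_sq, this]
      simp_rw [real_inner_self_eq_norm_sq]
    rw [norm_smul, mul_pow]
    rw [hsum]
    simp [abs_of_nonneg (le_of_lt (inv_pos.mpr hn')), one_div, ← inv_pow]
    exact Or.inl rfl
  refine ⟨main, fun θ₀ => ?_⟩
  have hiff : ∀ θ θ' : Θ,
      (‖(n : ℝ)⁻¹ • ∑ i, ((∫ y, Φ (Xs i, y) ∂(P θ i)) - Φ (Xs i, Ys i))‖ ≤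
        ‖(n : ℝ)⁻¹ • ∑ i, ((∫ y, Φ (Xs i, y) ∂(P θ' i)) - Φ (Xs i, Ys i))‖) ↔
      ((n : ℝ)⁻¹ * ∑ i, ‖(∫ y, φY y ∂(P θ i)) - φY (Ys i)‖ ^ 2 ≤
        (n : ℝ)⁻¹ * ∑ i, ‖(∫ y, φY y ∂(P θ' i)) - φY (Ys i)‖ ^ 2) := by
    intro θ θ'
    rw [← pow_le_pow_iff_left₀ (norm_nonneg _) (norm_nonneg _) (two_ne_zero), main θ, main θ']
    rw [mul_le_mul_iff_right₀ (by positivity : (0:ℝ) < 1 / (n:ℝ)^2),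
      mul_le_mul_iff_right₀ (inv_pos.mpr hn')]
  exact ⟨fun h θ => (hiff θ₀ θ).mp (h θ), fun h θ => (hiff θ₀ θ).mpr (h θ)⟩
end
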